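/- Let C : H → 2^H be maximally monotone and uniformly monotone with modulus φ, and let 𝐂 = W Σ* C Σ + N_𝒮 on 𝐇 = ∏ᵢ Hᵢ, where W(x) = (Wᵢxᵢ)ᵢ, Γ commutes with each Wᵢ, and 𝒮 = ran Σ*. Then for all x, y ∈ 𝐇 and all u ∈ W^{-1}Γ𝐂x, v ∈ W^{-1}Γ𝐂y, ⟨u − v, x − y⟩_{Γ^{-1}W} ≥ φ(‖Σx − Σy‖). -/

import Mathlib

open RealInnerProductSpace

def IsMonotoneOp {H : Type*} [NormedAddCommGroup H] [InnerProductSpace ℝ H]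
    (A : H → Set H) : Prop :=
  ∀ ⦃x u y v⦄, u ∈ A x → v ∈ A y → 0 ≤ ⟪u - v, x - y⟫

def IsMaxMonotoneOp {H : Type*} [NormedAddCommGroup H] [InnerProductSpace ℝ H]
    (A : H → Set H) : Prop :=
  IsMonotoneOp A ∧ ∀ x u, (∀ y v, v ∈ A y → 0 ≤ ⟪u - v, x - y⟫) → u ∈ A x

/-- Membership in the diagonal-like subspace 𝒮 = ran Σ*. -/
def InS {H : Type*} [NormedAddCommGroup H] [InnerProductSpace ℝ H]
    {n : ℕ} (Hsub : Fin n → Submodule ℝ H) [∀ i, CompleteSpace (Hsub i)]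
    (x : Fin n → H) : Prop :=
  ∃ a : H, ∀ i, x i = ((Hsub i).orthogonalProjectionOnto a : H)

/-- Membership in 𝐂 x = W Σ* C Σ x + N_𝒮 x. -/
def InCbold {H : Type*} [NormedAddCommGroup H] [InnerProductSpace ℝ H]
    {n : ℕ} (W : Fin n → H →L[ℝ] H) (Hsub : Fin n → Submodule ℝ H)
    [∀ i, CompleteSpace (Hsub i)] (C : H → Set H)
    (x w : Fin n → H) : Prop :=
  ∃ c ∈ C (∑ i, W i (x i)), ∃ nv : Fin n → H,
    (InS Hsub x ∧ ∀ s : Fin n → H, InS Hsub s → ∑ i, ⟪nv i, s i⟫ = 0) ∧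
    ∀ i, w i = W i (((Hsub i).orthogonalProjectionOnto c : H)) + nv i

/-- uniform monotonicity of C transfers to W⁻¹Γ𝐂 in the metric
⟨·,·⟩_{Γ⁻¹W}: for u ∈ W⁻¹Γ𝐂x and v ∈ W⁻¹Γ𝐂y,
⟨u − v, x − y⟩_{Γ⁻¹W} ≥ φ(‖Σx − Σy‖). -/
theorem uniform_monotonicity_transfer
    {H : Type*} [NormedAddCommGroup H] [InnerProductSpace ℝ H] [CompleteSpace H]
    (n : ℕ) (W : Fin n → H →L[ℝ] H) (Hsub : Fin n → Submodule ℝ H)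
    [∀ i, CompleteSpace (Hsub i)]
    (hWsa : ∀ i, IsSelfAdjoint (W i))
    (hWpos : ∀ i, ∀ x, 0 ≤ ⟪W i x, x⟫)
    (hker : ∀ i, LinearMap.ker (W i : H →ₗ[ℝ] H) = (Hsub i)ᗮ)
    (hWstrong : ∀ i, ∃ c : ℝ, 0 < c ∧ ∀ x ∈ Hsub i, c * ‖x‖ ^ 2 ≤ ⟪W i x, x⟫)
    (hsum : ∀ x : H, ∑ i, W i x = x)
    (Γ Γinv : H →L[ℝ] H) (hΓsa : IsSelfAdjoint Γ)
    (hΓpos : ∃ c : ℝ, 0 < c ∧ ∀ x, c * ‖x‖ ^ 2 ≤ ⟪Γ x, x⟫)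
    (hΓinv : ∀ x, Γinv (Γ x) = x ∧ Γ (Γinv x) = x)
    (hΓH : ∀ i, ∀ x ∈ Hsub i, Γ x ∈ Hsub i)
    (hcomm : ∀ i, ∀ x, Γ (W i x) = W i (Γ x))
    (C : H → Set H) (hCmax : IsMaxMonotoneOp C)
    (φ : ℝ → ℝ)
    (hunif : ∀ x u y v, u ∈ C x → v ∈ C y → ⟪u - v, x - y⟫ ≥ φ ‖x - y‖)
    (x y u v : Fin n → H)
    (hx : ∀ i, x i ∈ Hsub i) (hy : ∀ i, y i ∈ Hsub i)
    (hu : ∃ w : Fin n → H, InCbold W Hsub C x w ∧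
      ∀ i, u i ∈ Hsub i ∧ W i (u i) = Γ (w i))
    (hv : ∃ w : Fin n → H, InCbold W Hsub C y w ∧
      ∀ i, v i ∈ Hsub i ∧ W i (v i) = Γ (w i)) :
    ∑ i, ⟪Γinv (W i (u i - v i)), x i - y i⟫ ≥
      φ ‖(∑ i, W i (x i)) - ∑ i, W i (y i)‖ := by

  classical
  obtain ⟨w, ⟨c, hc, nv, ⟨hxS, hnv⟩, hw⟩, hwu⟩ := hu
  obtain ⟨w', ⟨c', hc', nv', ⟨hyS, hnv'⟩, hw'⟩, hwv⟩ := hv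
  have hsymm : ∀ i (a b : H), ⟪W i a, b⟫ = ⟪a, W i b⟫ := fun i a b =>
    (ContinuousLinearMap.isSelfAdjoint_iff_isSymmetric.mp (hWsa i)) a b
  have hrange : ∀ i (z : H), W i z ∈ Hsub i := by
    intro i z
    rw [← (Hsub i).orthogonal_orthogonal]
    refine (Submodule.mem_orthogonal _ _).mpr (fun k hk => ?_)
    rw [← hker i] at hk
    have hk0 : W i k = 0 := hk
    rw [← hsymm i k z, hk0, inner_zero_left]
  have hproj : ∀ i (a b : H), b ∈ Hsub i →
      ⟪((Hsub i).orthogonalProjectionOnto a : H), b⟫ = ⟪a, b⟫ := by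
    intro i a b hb
    have h0 : ⟪b, a - ((Hsub i).orthogonalProjectionOnto a : H)⟫ = 0 :=
      (Submodule.sub_starProjection_mem_orthogonal (K := Hsub i) a) b hb
    have h0' : ⟪a - ((Hsub i).orthogonalProjectionOnto a : H), b⟫ = 0 := by
      rw [real_inner_comm]; exact h0
    rw [inner_sub_left] at h0'
    linarith
  have key : ∀ i, Γinv (W i (u i - v i)) = w i - w' i := by
    intro i
    have h : W i (u i - v i) = Γ (w i - w' i) := by
      rw [map_sub, map_sub, (hwu i).2, (hwv i).2]
    rw [h, (hΓinv _).1]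
  have hterm : ∀ i, ⟪Γinv (W i (u i - v i)), x i - y i⟫ =
      ⟪c - c', W i (x i) - W i (y i)⟫ + (⟪nv i, x i - y i⟫ - ⟪nv' i, x i - y i⟫) := by
    intro i
    rw [key i, hw i, hw' i]
    have h1 : ⟪W i (((Hsub i).orthogonalProjectionOnto c : H)), x i - y i⟫
        = ⟪c, W i (x i) - W i (y i)⟫ := by
      rw [hsymm, hproj i c _ (hrange i _), map_sub]
    have h2 : ⟪W i (((Hsub i).orthogonalProjectionOnto c' : H)), x i - y i⟫
        = ⟪c', W i (x i) - W i (y i)⟫ := by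
      rw [hsymm, hproj i c' _ (hrange i _), map_sub]
    rw [show (W i (((Hsub i).orthogonalProjectionOnto c : H)) + nv i) -
        (W i (((Hsub i).orthogonalProjectionOnto c' : H)) + nv' i)
        = (W i (((Hsub i).orthogonalProjectionOnto c : H)) -
           W i (((Hsub i).orthogonalProjectionOnto c' : H))) + (nv i - nv' i) by abel]
    rw [inner_add_left, inner_sub_left, inner_sub_left, h1, h2, inner_sub_left]
  have hsxy : InS Hsub (fun i => x i - y i) := by
    obtain ⟨a, ha⟩ := hxS
    obtain ⟨b, hb⟩ := hyS
    refine ⟨a - b, fun i => ?_⟩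
    rw [map_sub, Submodule.coe_sub, ← ha i, ← hb i]
  have hnvz : ∑ i, ⟪nv i, x i - y i⟫ = 0 := hnv _ hsxy
  have hnvz' : ∑ i, ⟪nv' i, x i - y i⟫ = 0 := hnv' _ hsxy
  calc ∑ i, ⟪Γinv (W i (u i - v i)), x i - y i⟫
      = ∑ i, (⟪c - c', W i (x i) - W i (y i)⟫
          + (⟪nv i, x i - y i⟫ - ⟪nv' i, x i - y i⟫)) := by
        exact Finset.sum_congr rfl (fun i _ => hterm i)
    _ = ⟪c - c', (∑ i, W i (x i)) - ∑ i, W i (y i)⟫ := by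
        rw [Finset.sum_add_distrib, Finset.sum_sub_distrib, hnvz, hnvz', sub_zero, add_zero,
          ← inner_sum, ← Finset.sum_sub_distrib]
    _ ≥ φ ‖(∑ i, W i (x i)) - ∑ i, W i (y i)‖ :=
        hunif _ c _ c' hc hc'
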